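/- Let α > 0, let μ : ℝ → ℝ be continuous and nonnegative, let φ : [0,∞) → ℝ be continuously differentiable, and let b₁ : [0,∞) → ℝ be continuously differentiable and positive. For an integer m ≥ 1 define, on the set T̄_m = {(a,t) : a ≥ 0, a + (m−1)α ≤ t < a + mα}, the function n(a,t) = (∏_{i=1}^{m} b₁(t − a − (i−1)α)) · φ(mα + a − t) · exp(−∫₀^{t−a−(m−1)α} μ(s + mα + a − t) ds) · exp(−(m−1)·∫₀^α μ(s) ds) · exp(−∫₀^a μ(s) ds). Then for every m ≥ 1, n is differentiable at every point of the interior of T̄_m and satisfies the McKendrick equation ∂n/∂t + ∂n/∂a = −μ(a) n(a,t) there; moreover m = ⌊(t−a)/α⌋ + 1 on T̄_m. -/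

import Mathlib

open MeasureTheory Real Set

/-- For a population with one reproductive age class at age `α`
(boundary condition `n(0,t) = b₁(t) n(α,t)`), the explicit formula on the set
`T̄_m = {(a,t) : a ≥ 0, a+(m−1)α ≤ t < a+mα}` is differentiable in the interior
of `T̄_m` and satisfies the McKendrick equation there; moreover
`m = ⌊(t−a)/α⌋ + 1` on `T̄_m`. -/
theorem mckendrick_classical_solution_one_age_class
    (α : ℝ) (hα : 0 < α)
    (μ : ℝ → ℝ) (hμc : Continuous μ) (hμ0 : ∀ x, 0 ≤ μ x)
    (φ : ℝ → ℝ) (hφ : ContDiffOn ℝ 1 φ (Set.Ici 0))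
    (b₁ : ℝ → ℝ) (hb₁ : ContDiffOn ℝ 1 b₁ (Set.Ici 0)) (hb₁pos : ∀ t, 0 ≤ t → 0 < b₁ t)
    (m : ℕ) (hm : 1 ≤ m)
    (T : Set (ℝ × ℝ))
    (hT : T = {p : ℝ × ℝ |
      0 ≤ p.1 ∧ p.1 + ((m : ℝ) - 1) * α ≤ p.2 ∧ p.2 < p.1 + (m : ℝ) * α})
    (n : ℝ × ℝ → ℝ)
    (hn : ∀ p ∈ T,
      n p = (∏ i ∈ Finset.range m, b₁ (p.2 - p.1 - (i : ℝ) * α)) *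
        φ ((m : ℝ) * α + p.1 - p.2) *
        Real.exp (-(∫ s in (0:ℝ)..(p.2 - p.1 - ((m : ℝ) - 1) * α),
          μ (s + (m : ℝ) * α + p.1 - p.2))) *
        Real.exp (-(((m : ℝ) - 1) * ∫ s in (0:ℝ)..α, μ s)) *
        Real.exp (-(∫ s in (0:ℝ)..p.1, μ s))) :
    (∀ p ∈ interior T,
      DifferentiableAt ℝ n p ∧
      fderiv ℝ n p ((0:ℝ), (1:ℝ)) + fderiv ℝ n p ((1:ℝ), (0:ℝ)) = -(μ p.1) * n p) ∧
    (∀ p ∈ T, (⌊(p.2 - p.1) / α⌋ + 1 : ℤ) = m) := by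
  -- Fundamental theorem of calculus for μ
  have hFTC : ∀ u : ℝ, HasDerivAt (fun v => ∫ s in (0:ℝ)..v, μ s) (μ u) u := fun u =>
    intervalIntegral.integral_hasDerivAt_right (hμc.intervalIntegrable _ _)
      (hμc.aestronglyMeasurable.stronglyMeasurableAtFilter) hμc.continuousAt
  -- the two auxiliary one-variable functions
  set G : ℝ → ℝ := fun y =>
    (∏ i ∈ Finset.range m, b₁ (y - (i : ℝ) * α)) * φ ((m : ℝ) * α - y) *
      Real.exp ((∫ s in (0:ℝ)..((m : ℝ) * α - y), μ s) - ∫ s in (0:ℝ)..α, μ s) *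
      Real.exp (-(((m : ℝ) - 1) * ∫ s in (0:ℝ)..α, μ s)) with hG
  set H : ℝ → ℝ := fun a => Real.exp (-(∫ s in (0:ℝ)..a, μ s)) with hH
  -- n coincides with G(t-a) * H(a) on T
  have hnF : ∀ p ∈ T, n p = G (p.2 - p.1) * H p.1 := by
    intro p hp
    rw [hn p hp, hG, hH]
    have h1 : (∫ s in (0:ℝ)..(p.2 - p.1 - ((m : ℝ) - 1) * α),
        μ (s + (m : ℝ) * α + p.1 - p.2))
        = (∫ s in (0:ℝ)..α, μ s) - ∫ s in (0:ℝ)..((m : ℝ) * α - (p.2 - p.1)), μ s := by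
      have h2 : (∫ s in (0:ℝ)..(p.2 - p.1 - ((m : ℝ) - 1) * α),
          μ (s + (m : ℝ) * α + p.1 - p.2))
          = ∫ s in (0:ℝ)..(p.2 - p.1 - ((m : ℝ) - 1) * α),
            μ (s + ((m : ℝ) * α + p.1 - p.2)) := by
        simp only [show ∀ s : ℝ, s + (m : ℝ) * α + p.1 - p.2
          = s + ((m : ℝ) * α + p.1 - p.2) from fun s => by ring]
      rw [h2, intervalIntegral.integral_comp_add_right (fun s => μ s)
        ((m : ℝ) * α + p.1 - p.2),
        show (0:ℝ) + ((m : ℝ) * α + p.1 - p.2) = (m : ℝ) * α - (p.2 - p.1) by ring,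
        show p.2 - p.1 - ((m : ℝ) - 1) * α + ((m : ℝ) * α + p.1 - p.2) = α by ring]
      rw [← intervalIntegral.integral_interval_sub_left
        (hμc.intervalIntegrable 0 α) (hμc.intervalIntegrable 0 _)]
    rw [h1, show (m : ℝ) * α + p.1 - p.2 = (m : ℝ) * α - (p.2 - p.1) by ring]
    rw [show -((∫ s in (0:ℝ)..α, μ s) - ∫ s in (0:ℝ)..((m : ℝ) * α - (p.2 - p.1)), μ s)
      = (∫ s in (0:ℝ)..((m : ℝ) * α - (p.2 - p.1)), μ s) - ∫ s in (0:ℝ)..α, μ s by ring]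
  subst hT
  constructor
  · rintro ⟨a, t⟩ hp
    have hpT : ((a, t) : ℝ × ℝ) ∈ {p : ℝ × ℝ |
        0 ≤ p.1 ∧ p.1 + ((m : ℝ) - 1) * α ≤ p.2 ∧ p.2 < p.1 + (m : ℝ) * α} :=
      interior_subset hp
    obtain ⟨h0, h1, h2⟩ := hpT
    simp only at h0 h1 h2
    -- strict inequalities in the interior
    obtain ⟨ε, hε, hball⟩ := Metric.mem_nhds_iff.1 (mem_interior_iff_mem_nhds.1 hp)
    have hmem : ∀ q : ℝ × ℝ, dist q ((a, t) : ℝ × ℝ) < ε →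
        0 ≤ q.1 ∧ q.1 + ((m : ℝ) - 1) * α ≤ q.2 ∧ q.2 < q.1 + (m : ℝ) * α := by
      intro q hq; exact hball (Metric.mem_ball.2 hq)
    have ha0 : 0 < a := by
      have hq : dist ((a - ε / 2, t) : ℝ × ℝ) ((a, t) : ℝ × ℝ) < ε := by
        rw [Prod.dist_eq]
        have e1 : dist (a - ε / 2) a = ε / 2 := by
          rw [Real.dist_eq, show a - ε / 2 - a = -(ε / 2) by ring, abs_neg,
            abs_of_nonneg (half_pos hε).le]
        rw [e1, dist_self, max_eq_left (half_pos hε).le]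
        linarith
      have := (hmem (a - ε / 2, t) hq).1
      simp only at this; linarith
    have hstrict : a + ((m : ℝ) - 1) * α < t := by
      have hq : dist ((a, t - ε / 2) : ℝ × ℝ) ((a, t) : ℝ × ℝ) < ε := by
        rw [Prod.dist_eq]
        have e1 : dist (t - ε / 2) t = ε / 2 := by
          rw [Real.dist_eq, show t - ε / 2 - t = -(ε / 2) by ring, abs_neg,
            abs_of_nonneg (half_pos hε).le]
        rw [e1, dist_self, max_eq_right (half_pos hε).le]
        linarith
      have := (hmem (a, t - ε / 2) hq).2.1
      simp only at this; linarith
    set y := t - a with hy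
    have hy1 : ((m : ℝ) - 1) * α < y := by simp [hy]; linarith
    have hy2 : y < (m : ℝ) * α := by simp [hy]; linarith
    -- G is differentiable at y
    have hGd : DifferentiableAt ℝ G y := by
      rw [hG]
      apply DifferentiableAt.mul
      apply DifferentiableAt.mul
      apply DifferentiableAt.mul
      · apply DifferentiableAt.fun_finsetProd
        intro i hi
        have him : (i : ℝ) ≤ (m : ℝ) - 1 := by
          have : (i : ℝ) + 1 ≤ (m : ℝ) := by
            exact_mod_cast Nat.succ_le_of_lt (Finset.mem_range.1 hi)
          linarith
        have hpos : 0 < y - (i : ℝ) * α := by nlinarith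
        have hb : DifferentiableAt ℝ b₁ (y - (i : ℝ) * α) :=
          (hb₁.contDiffAt (Ici_mem_nhds hpos)).differentiableAt one_ne_zero
        exact hb.comp y (differentiableAt_id.sub (differentiableAt_const _))
      · have hpos : 0 < (m : ℝ) * α - y := by linarith
        have hd : DifferentiableAt ℝ φ ((m : ℝ) * α - y) :=
          (hφ.contDiffAt (Ici_mem_nhds hpos)).differentiableAt one_ne_zero
        exact hd.comp y ((differentiableAt_const _).sub differentiableAt_id)
      · apply DifferentiableAt.exp
        apply DifferentiableAt.sub_const
        exact ((hFTC ((m : ℝ) * α - y)).differentiableAt).comp y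
          ((differentiableAt_const _).sub differentiableAt_id)
      · exact differentiableAt_const _
    obtain ⟨g, hGder⟩ : ∃ g, HasDerivAt G g y := ⟨deriv G y, hGd.hasDerivAt⟩
    -- H has derivative -μ a * H a at a
    have hHder : HasDerivAt H (Real.exp (-(∫ s in (0:ℝ)..a, μ s)) * (-μ a)) a := by
      have : HasDerivAt (fun a' => -(∫ s in (0:ℝ)..a', μ s)) (-μ a) a := (hFTC a).neg
      exact this.exp
    -- the product function and its fderiv
    have hL1 : HasFDerivAt (fun q : ℝ × ℝ => q.2 - q.1)
        (ContinuousLinearMap.snd ℝ ℝ ℝ - ContinuousLinearMap.fst ℝ ℝ ℝ) (a, t) :=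
      hasFDerivAt_snd.sub hasFDerivAt_fst
    have hGq : HasFDerivAt (fun q : ℝ × ℝ => G (q.2 - q.1))
        (g • (ContinuousLinearMap.snd ℝ ℝ ℝ - ContinuousLinearMap.fst ℝ ℝ ℝ)) (a, t) := by
      have := hGder.comp_hasFDerivAt (f := fun q : ℝ × ℝ => q.2 - q.1) (a, t) hL1
      exact this
    have hHq : HasFDerivAt (fun q : ℝ × ℝ => H q.1)
        ((Real.exp (-(∫ s in (0:ℝ)..a, μ s)) * (-μ a)) • ContinuousLinearMap.fst ℝ ℝ ℝ)
        (a, t) :=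
      hHder.comp_hasFDerivAt (f := fun q : ℝ × ℝ => q.1) (a, t) hasFDerivAt_fst
    have hF : HasFDerivAt (fun q : ℝ × ℝ => G (q.2 - q.1) * H q.1)
        (G (t - a) •
            ((Real.exp (-(∫ s in (0:ℝ)..a, μ s)) * (-μ a)) • ContinuousLinearMap.fst ℝ ℝ ℝ)
          + H a •
            (g • (ContinuousLinearMap.snd ℝ ℝ ℝ - ContinuousLinearMap.fst ℝ ℝ ℝ))) (a, t) :=
      hGq.mul hHq
    -- transfer to n by local equality
    have hev : n =ᶠ[nhds ((a, t) : ℝ × ℝ)] fun q : ℝ × ℝ => G (q.2 - q.1) * H q.1 := by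
      filter_upwards [isOpen_interior.mem_nhds hp] with q hq
      exact hnF q (interior_subset hq)
    have hFn : HasFDerivAt n _ ((a, t) : ℝ × ℝ) := hF.congr_of_eventuallyEq hev
    refine ⟨hFn.differentiableAt, ?_⟩
    rw [hFn.fderiv]
    have hnp : n (a, t) = G (t - a) * H a := hnF (a, t) ⟨h0, h1, h2⟩
    simp only [ContinuousLinearMap.add_apply, ContinuousLinearMap.smul_apply,
      ContinuousLinearMap.sub_apply, ContinuousLinearMap.coe_fst',
      ContinuousLinearMap.coe_snd', smul_eq_mul, hnp, hH]
    ring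
  · rintro ⟨a, t⟩ ⟨h0, h1, h2⟩
    simp only at h0 h1 h2
    have : ⌊(t - a) / α⌋ = (m : ℤ) - 1 := by
      rw [Int.floor_eq_iff]
      constructor
      · rw [le_div_iff₀ hα]; push_cast; linarith
      · rw [div_lt_iff₀ hα]; push_cast; linarith
    simp only at this ⊢
    rw [this]; ring
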